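/- Let K and τ be positive integers, D ∈ ℝ^{τ×K}, and d ∈ ℝ^τ. Consider the feasible set F = { (x, ξ¹, …, ξ^K) : Dx ≤ d, x ∈ [−1,1]^K, ξ^k ∈ [−1,1]^K for all k ∈ [K] } and objective max_{k∈[K]} | ξ^k_k x_k − 1 |, where ξ^k_k is the k-th coordinate of ξ^k. Then there exists a feasible point in F whose objective value equals 0 if and only if there exists x ∈ {−1, 1}^K with Dx ≤ d. -/
import Mathlib


/-- NP-hardness reduction for sDFO with convex piecewise affine recourse and `ℓ₁`-ball
uncertainty: there is a feasible point `(x, ξ¹, …, ξ^K)` with `Dx ≤ d`,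
`x ∈ [−1,1]^K`, `ξ^k ∈ [−1,1]^K`, whose objective `max_k |ξ^k_k x_k − 1|` equals `0`
iff the binary program `{x ∈ {−1,1}^K : Dx ≤ d}` is feasible. -/
theorem sdfo_convex_np_hard_reduction {K τ : ℕ} (hK : 0 < K) (hτ : 0 < τ)
    (D : Matrix (Fin τ) (Fin K) ℝ) (d : Fin τ → ℝ) :
    (∃ (x : Fin K → ℝ) (ξ : Fin K → Fin K → ℝ),
        (∀ j, (∑ i, D j i * x i) ≤ d j) ∧ (∀ i, x i ∈ Set.Icc (-1 : ℝ) 1) ∧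
        (∀ k i, ξ k i ∈ Set.Icc (-1 : ℝ) 1) ∧
        (⨆ k : Fin K, |ξ k k * x k - 1|) = 0) ↔
      ∃ x : Fin K → ℝ, (∀ i, x i = 1 ∨ x i = -1) ∧
        ∀ j, (∑ i, D j i * x i) ≤ d j := by
  have : NeZero K := ⟨hK.ne'⟩
  constructor
  · rintro ⟨x, ξ, hDx, hx, hξ, hsup⟩
    refine ⟨x, fun k => ?_, hDx⟩
    have hbdd : BddAbove (Set.range fun k : Fin K => |ξ k k * x k - 1|) :=
      Set.Finite.bddAbove (Set.finite_range _)
    have hle : |ξ k k * x k - 1| ≤ 0 := hsup ▸ le_ciSup hbdd k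
    have heq : ξ k k * x k = 1 := by
      have := abs_nonneg (ξ k k * x k - 1)
      have h0 : |ξ k k * x k - 1| = 0 := le_antisymm hle this
      have := abs_eq_zero.mp h0
      linarith
    have hx1 : |x k| ≤ 1 := abs_le.mpr ⟨(hx k).1, (hx k).2⟩
    have hξ1 : |ξ k k| ≤ 1 := abs_le.mpr ⟨(hξ k k).1, (hξ k k).2⟩
    have habs : |x k| = 1 := by
      have h1 : |ξ k k| * |x k| = 1 := by rw [← abs_mul, heq, abs_one]
      nlinarith [abs_nonneg (x k), abs_nonneg (ξ k k)]
    rcases abs_eq (by norm_num : (0:ℝ) ≤ 1) |>.mp habs with h | h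
    · exact Or.inl h
    · exact Or.inr h
  · rintro ⟨x, hx1, hDx⟩
    refine ⟨x, fun _ => x, hDx, fun i => ?_, fun k i => ?_, ?_⟩
    · rcases hx1 i with h | h <;> simp [h]
    · rcases hx1 i with h | h <;> simp [h]
    · have : ∀ k : Fin K, |x k * x k - 1| = 0 := by
        intro k; rcases hx1 k with h | h <;> simp [h]
      simp [this]
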